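/- For every finite connected simple graph G and every t ≥ 2, the cooling number satisfies CL(ILT_2(G)) ≤ CL(ILT_t(G)) ≤ CL(ILT_2(G)) + 1. -/

import Mathlib

/-- A cooling sequence for `G`: a sequence `v : Fin k → V` of sources (the `i`-th source,
0-based, is chosen in round `i + 1`) such that each source is uncooled when chosen
(`dist (v i) (v j) > j - i` for `i < j` in 1-based indexing), and the sequence cannot be
extended: every vertex is cooled by the end of round `k + 1`. -/
def IsCoolingSeq {V : Type*} (G : SimpleGraph V) {k : ℕ} (v : Fin k → V) : Prop :=
  (∀ i j : Fin k, i < j → (j : ℕ) - (i : ℕ) < G.dist (v i) (v j)) ∧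
  (∀ u : V, ∃ i : Fin k, (i : ℕ) + 1 + G.dist (v i) u ≤ k + 1)

/-- The round in which the cooling process with sources `v` ends: the maximum over
vertices `u` of the first round in which `u` is cooled, `min_i (i + dist (v i) u)`
(1-based `i`). -/
noncomputable def coolTime {V : Type*} [Fintype V] (G : SimpleGraph V) {k : ℕ}
    (v : Fin k → V) : ℕ :=
  Finset.univ.sup fun u : V => sInf {m : ℕ | ∃ i : Fin k, m = (i : ℕ) + 1 + G.dist (v i) u}

/-- The cooling number of `G`: the maximum, over all cooling sequences of `G`, of the
round in which the cooling process ends. -/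
noncomputable def coolingNumber {V : Type*} [Fintype V] (G : SimpleGraph V) : ℕ :=
  sSup {T : ℕ | ∃ (k : ℕ) (v : Fin k → V), IsCoolingSeq G v ∧ T = coolTime G v}

/-- The Iterated Local Transitivity graph of `G`, on vertex set `V ⊕ V`, where `Sum.inr x`
is the clone of the original vertex `Sum.inl x`: clones are adjacent to their original
vertex and to its neighbors, and clones are pairwise non-adjacent. -/
def ILT {V : Type*} (G : SimpleGraph V) : SimpleGraph (V ⊕ V) :=
  SimpleGraph.fromRel fun a b =>
    match a, b with
    | Sum.inl x, Sum.inl y => G.Adj x y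
    | Sum.inl x, Sum.inr y => x = y ∨ G.Adj x y
    | Sum.inr x, Sum.inl y => x = y ∨ G.Adj x y
    | Sum.inr _, Sum.inr _ => False

/-- The vertex type of `ILT_t(G)`. -/
def ILTVert (V : Type*) : ℕ → Type _
  | 0 => V
  | t + 1 => ILTVert V t ⊕ ILTVert V t

instance ILTVert.fintype (V : Type*) [Fintype V] : ∀ t, Fintype (ILTVert V t)
  | 0 => inferInstanceAs (Fintype V)
  | t + 1 =>
    letI := ILTVert.fintype V t
    inferInstanceAs (Fintype (ILTVert V t ⊕ ILTVert V t))

/-- `ILTiter G t` is the result of `t` iterated applications of the ILT construction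
to `G`. -/
def ILTiter {V : Type*} (G : SimpleGraph V) : (t : ℕ) → SimpleGraph (ILTVert V t)
  | 0 => G
  | t + 1 => ILT (ILTiter G t)


namespace ILTproof

open SimpleGraph Sum

variable {V : Type*} {G : SimpleGraph V}

/-- base projection -/
def base : V ⊕ V → V := Sum.elim id id

@[simp] lemma base_inl (x : V) : base (inl x : V ⊕ V) = x := rfl
@[simp] lemma base_inr (x : V) : base (inr x : V ⊕ V) = x := rfl

lemma adj_ll {x y : V} : (ILT G).Adj (inl x) (inl y) ↔ G.Adj x y := by
  constructor
  · rintro ⟨-, h | h⟩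
    · exact h
    · exact h.symm
  · intro h
    exact ⟨by simp [h.ne], Or.inl h⟩

lemma adj_lr {x y : V} : (ILT G).Adj (inl x) (inr y) ↔ x = y ∨ G.Adj x y := by
  constructor
  · rintro ⟨-, (h | h) | (h | h)⟩
    · exact Or.inl h
    · exact Or.inr h
    · exact Or.inl h.symm
    · exact Or.inr h.symm
  · intro h
    exact ⟨by simp, Or.inl h⟩

lemma adj_rl {x y : V} : (ILT G).Adj (inr x) (inl y) ↔ x = y ∨ G.Adj x y := by
  rw [adj_comm, adj_lr]
  constructor
  · rintro (h | h); exacts [Or.inl h.symm, Or.inr h.symm]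
  · rintro (h | h); exacts [Or.inl h.symm, Or.inr h.symm]

lemma adj_rr {x y : V} : ¬ (ILT G).Adj (inr x) (inr y) := by
  rintro ⟨-, h | h⟩ <;> exact h

lemma adj_base {a b : V ⊕ V} (h : (ILT G).Adj a b) :
    base a = base b ∨ G.Adj (base a) (base b) := by
  cases a with
  | inl x => cases b with
    | inl y => exact Or.inr (adj_ll.mp h)
    | inr y => exact adj_lr.mp h
  | inr x => cases b with
    | inl y => exact adj_rl.mp h
    | inr y => exact absurd h adj_rr

lemma walk_base {a b : V ⊕ V} (p : (ILT G).Walk a b) :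
    ∃ q : G.Walk (base a) (base b), q.length ≤ p.length := by
  induction p with
  | nil => exact ⟨SimpleGraph.Walk.nil, le_refl _⟩
  | @cons u c w h p ih =>
    obtain ⟨q, hq⟩ := ih
    rcases adj_base h with he | ha
    · exact ⟨q.copy he.symm rfl, by rw [SimpleGraph.Walk.length_copy]; simp; omega⟩
    · exact ⟨SimpleGraph.Walk.cons ha q, by simpa using hq⟩

/-- inl as a graph hom -/
def inlHom (G : SimpleGraph V) : G →g ILT G where
  toFun := inl
  map_rel' := fun h => adj_ll.mpr h

lemma walk_inl_inl {x y : V} (p : G.Walk x y) :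
    ∃ q : (ILT G).Walk (inl x) (inl y), q.length = p.length :=
  ⟨p.map (inlHom G), p.length_map _⟩

lemma walk_inl_inr {x y : V} (p : G.Walk x y) (hp : 1 ≤ p.length) :
    ∃ q : (ILT G).Walk (inl x) (inr y), q.length = p.length := by
  induction p with
  | nil => simp at hp
  | @cons u c w h p ih =>
    rcases Nat.eq_zero_or_pos p.length with h0 | h1
    · obtain rfl : c = w := SimpleGraph.Walk.eq_of_length_eq_zero h0
      refine ⟨SimpleGraph.Walk.cons (adj_lr.mpr (Or.inr h)) SimpleGraph.Walk.nil, ?_⟩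
      simp [h0]
    · obtain ⟨q, hq⟩ := ih h1
      exact ⟨SimpleGraph.Walk.cons (adj_ll.mpr h) q, by simp [hq]⟩

lemma walk_inr_inr {x y : V} (p : G.Walk x y) (hp : 2 ≤ p.length) :
    ∃ q : (ILT G).Walk (inr x) (inr y), q.length = p.length := by
  cases p with
  | nil => simp at hp
  | @cons u c w h p =>
    have h1 : 1 ≤ p.length := by
      simp only [SimpleGraph.Walk.length_cons] at hp; omega
    obtain ⟨q, hq⟩ := walk_inl_inr p h1
    exact ⟨SimpleGraph.Walk.cons (adj_rl.mpr (Or.inr h)) q, by simp [hq]⟩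

lemma ILT_connected (hG : G.Connected) : (ILT G).Connected := by
  rw [connected_iff]
  have hne : Nonempty V := hG.nonempty
  refine ⟨fun a b => ?_, ⟨inl hne.some⟩⟩
  have key : ∀ c : V ⊕ V, (ILT G).Reachable c (inl (base c)) := by
    intro c
    cases c with
    | inl x => exact SimpleGraph.Reachable.refl _
    | inr x => exact (SimpleGraph.Adj.reachable (adj_rl.mpr (Or.inl rfl)))
  have hbase : (ILT G).Reachable (inl (base a)) (inl (base b)) := by
    obtain ⟨p⟩ := hG.preconnected (base a) (base b)
    obtain ⟨q, -⟩ := walk_inl_inl p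
    exact ⟨q⟩
  exact ((key a).trans hbase).trans (key b).symm

section dist

variable (hG : G.Connected)
include hG

lemma dist_base_le (a b : V ⊕ V) :
    G.dist (base a) (base b) ≤ (ILT G).dist a b := by
  obtain ⟨p, hp⟩ := (ILT_connected hG).exists_walk_length_eq_dist a b
  obtain ⟨q, hq⟩ := walk_base p
  exact le_trans (SimpleGraph.dist_le q) (by omega)

lemma dist_ll (x y : V) : (ILT G).dist (inl x) (inl y) = G.dist x y := by
  refine le_antisymm ?_ (dist_base_le hG (inl x) (inl y))
  obtain ⟨p, hp⟩ := hG.exists_walk_length_eq_dist x y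
  obtain ⟨q, hq⟩ := walk_inl_inl p
  exact le_trans (SimpleGraph.dist_le q) (by omega)

lemma dist_lr {x y : V} (hxy : x ≠ y) :
    (ILT G).dist (inl x) (inr y) = G.dist x y := by
  refine le_antisymm ?_ (dist_base_le hG (inl x) (inr y))
  obtain ⟨p, hp⟩ := hG.exists_walk_length_eq_dist x y
  have h1 : 1 ≤ p.length := by
    have := hG.pos_dist_of_ne hxy
    omega
  obtain ⟨q, hq⟩ := walk_inl_inr p h1
  exact le_trans (SimpleGraph.dist_le q) (by omega)

omit hG in
lemma dist_lr_self (x : V) : (ILT G).dist (inl x) (inr x) = 1 :=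
  SimpleGraph.dist_eq_one_iff_adj.mpr (adj_lr.mpr (Or.inl rfl))

lemma dist_rr {x y : V} (h2 : 2 ≤ G.dist x y) :
    (ILT G).dist (inr x) (inr y) = G.dist x y := by
  refine le_antisymm ?_ (dist_base_le hG (inr x) (inr y))
  obtain ⟨p, hp⟩ := hG.exists_walk_length_eq_dist x y
  obtain ⟨q, hq⟩ := walk_inr_inr p (by omega)
  exact le_trans (SimpleGraph.dist_le q) (by omega)

lemma dist_rr_adj {x y : V} (h : G.Adj x y) :
    (ILT G).dist (inr x) (inr y) = 2 := by
  have hub : (ILT G).dist (inr x) (inr y) ≤ 2 := by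
    refine SimpleGraph.dist_le
      (SimpleGraph.Walk.cons (adj_rl.mpr (Or.inl rfl))
        (SimpleGraph.Walk.cons (adj_lr.mpr (Or.inr h)) SimpleGraph.Walk.nil))
  have hne : (inr x : V ⊕ V) ≠ inr y := by simp [h.ne]
  have h0 : 0 < (ILT G).dist (inr x) (inr y) :=
    (ILT_connected hG).pos_dist_of_ne hne
  have h1 : (ILT G).dist (inr x) (inr y) ≠ 1 := by
    intro hc
    exact adj_rr (SimpleGraph.dist_eq_one_iff_adj.mp hc)
  omega

/-- the clone dominates the original in distances -/
lemma dist_clone_ge {x : V} {z : V ⊕ V} (hz : z ≠ inr x) :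
    (ILT G).dist (inl x) z ≤ (ILT G).dist (inr x) z := by
  rcases eq_or_ne z (inl x) with rfl | hzx
  · simp [SimpleGraph.dist_self]
  · have hd0 : (ILT G).dist (inr x) z ≠ 0 := by
      have := (ILT_connected hG).pos_dist_of_ne (Ne.symm hz)
      omega
    obtain ⟨p, hp⟩ := SimpleGraph.exists_walk_of_dist_ne_zero hd0
    cases p with
    | nil => exact absurd rfl hz
    | @cons u c w h p =>
      cases c with
      | inr c' => exact absurd h adj_rr
      | inl c' =>
        rcases adj_rl.mp h with rfl | ha
        · calc (ILT G).dist (inl x) z ≤ p.length := SimpleGraph.dist_le p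
            _ ≤ _ := by simp only [SimpleGraph.Walk.length_cons] at hp; omega
        · calc (ILT G).dist (inl x) z ≤ (SimpleGraph.Walk.cons (adj_ll.mpr ha) p).length :=
              SimpleGraph.dist_le _
            _ = _ := by simpa using hp

end dist

section spread

variable {W : Type*}

/-- condition 1 of a cooling sequence -/
def Spread (H : SimpleGraph W) {k : ℕ} (v : Fin k → W) : Prop :=
  ∀ i j : Fin k, i < j → (j : ℕ) - (i : ℕ) < H.dist (v i) (v j)

/-- the maximum length of a spread sequence -/
noncomputable def LNum (H : SimpleGraph W) : ℕ := sSup {k : ℕ | ∃ v : Fin k → W, Spread H v}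

variable {H : SimpleGraph W}

lemma Spread.gap_lt {k : ℕ} {v : Fin k → W} (hv : Spread H v) {i j : Fin k} (hij : i ≠ j) :
    ((i : ℕ) - (j : ℕ)) + ((j : ℕ) - (i : ℕ)) < H.dist (v i) (v j) := by
  rcases lt_or_gt_of_ne hij with h | h
  · have := hv i j h
    have hle : (i : ℕ) ≤ j := le_of_lt h
    omega
  · have := hv j i h
    rw [SimpleGraph.dist_comm] at this
    have hle : (j : ℕ) ≤ i := le_of_lt h
    omega

lemma Spread.injective {k : ℕ} {v : Fin k → W} (hv : Spread H v) : Function.Injective v := by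
  intro i j hij
  by_contra hne
  have := hv.gap_lt (show i ≠ j from hne)
  rw [hij, SimpleGraph.dist_self] at this
  omega

lemma spread_zero : Spread H (fun i : Fin 0 => i.elim0) := by
  intro i _ _
  exact i.elim0

lemma lnum_set_nonempty : {k : ℕ | ∃ v : Fin k → W, Spread H v}.Nonempty :=
  ⟨0, fun i : Fin 0 => i.elim0, spread_zero⟩

variable [Fintype W]

lemma lnum_set_bddAbove : BddAbove {k : ℕ | ∃ v : Fin k → W, Spread H v} := by
  refine ⟨Fintype.card W, ?_⟩
  rintro k ⟨v, hv⟩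
  simpa using Fintype.card_le_of_injective v hv.injective

lemma le_LNum {k : ℕ} (v : Fin k → W) (hv : Spread H v) : k ≤ LNum H :=
  le_csSup lnum_set_bddAbove ⟨v, hv⟩

lemma exists_spread_LNum (H : SimpleGraph W) : ∃ v : Fin (LNum H) → W, Spread H v :=
  Nat.sSup_mem lnum_set_nonempty lnum_set_bddAbove

omit [Fintype W] in
/-- a non-extendable check: if condition 2 fails, we can extend -/
lemma spread_extend {k : ℕ} {v : Fin k → W} (hv : Spread H v)
    (hfail : ∃ u : W, ∀ i : Fin k, ¬((i : ℕ) + 1 + H.dist (v i) u ≤ k + 1)) :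
    ∃ v' : Fin (k + 1) → W, Spread H v' := by
  obtain ⟨u, hu⟩ := hfail
  refine ⟨fun i => if h : (i : ℕ) < k then v ⟨i, h⟩ else u, ?_⟩
  intro i j hij
  have hik : (i : ℕ) < k := by
    have hj : (j : ℕ) ≤ k := Nat.lt_succ_iff.mp j.isLt
    have := (Fin.lt_iff_val_lt_val.mp hij)
    omega
  rcases Nat.lt_or_ge (j : ℕ) k with hjk | hjk
  · simp only [dif_pos hik, dif_pos hjk]
    exact hv ⟨i, hik⟩ ⟨j, hjk⟩ (by simpa using hij)
  · have hjeq : (j : ℕ) = k := le_antisymm (Nat.lt_succ_iff.mp j.isLt) hjk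
    simp only [dif_pos hik, dif_neg (by omega : ¬ (j : ℕ) < k)]
    have := hu ⟨i, hik⟩
    simp only at this
    omega

lemma isCoolingSeq_max_spread (v : Fin (LNum H) → W) (hv : Spread H v) :
    IsCoolingSeq H v := by
  refine ⟨hv, ?_⟩
  by_contra hc
  push_neg at hc
  obtain ⟨u, hu⟩ := hc
  obtain ⟨v', hv'⟩ := spread_extend hv ⟨u, fun i => by have := hu i; omega⟩
  have := le_LNum v' hv'
  omega

lemma coolTime_le {k : ℕ} {v : Fin k → W} (hv : IsCoolingSeq H v) :
    coolTime H v ≤ k + 1 := by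
  refine Finset.sup_le fun u _ => ?_
  obtain ⟨i, hi⟩ := hv.2 u
  exact le_trans (Nat.sInf_le ⟨i, rfl⟩) hi

lemma coolTime_ge {k : ℕ} {v : Fin k → W} (hv : Spread H v) (hk : 1 ≤ k) :
    k ≤ coolTime H v := by
  have hlast : k - 1 < k := by omega
  set ulast := v ⟨k - 1, hlast⟩ with hu
  have hmem : (⟨k - 1, hlast⟩ : Fin k).val + 1 + H.dist (v ⟨k - 1, hlast⟩) ulast = k := by
    simp [hu, SimpleGraph.dist_self]
    omega
  have hnon : {m : ℕ | ∃ i : Fin k, m = (i : ℕ) + 1 + H.dist (v i) ulast}.Nonempty :=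
    ⟨k, ⟨_, hmem.symm⟩⟩
  have hge : k ≤ sInf {m : ℕ | ∃ i : Fin k, m = (i : ℕ) + 1 + H.dist (v i) ulast} := by
    obtain ⟨i, hi⟩ := Nat.sInf_mem hnon
    rcases eq_or_ne (i : ℕ) (k - 1) with he | hne
    · have : i = (⟨k - 1, hlast⟩ : Fin k) := Fin.ext he
      rw [hi, this, hmem]
    · have hlt : i < (⟨k - 1, hlast⟩ : Fin k) := by
        rw [Fin.lt_iff_val_lt_val]
        have := i.isLt
        simp only
        omega
      have h2 := hv i ⟨k - 1, hlast⟩ hlt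
      rw [← hu] at h2
      simp only at h2
      omega
  have hsup := Finset.le_sup (f := fun u : W =>
    sInf {m : ℕ | ∃ i : Fin k, m = (i : ℕ) + 1 + H.dist (v i) u}) (Finset.mem_univ ulast)
  exact le_trans hge hsup

lemma cool_set_bddAbove :
    BddAbove {T : ℕ | ∃ (k : ℕ) (v : Fin k → W), IsCoolingSeq H v ∧ T = coolTime H v} := by
  refine ⟨Fintype.card W + 1, ?_⟩
  rintro T ⟨k, v, hv, rfl⟩
  have h1 : k ≤ Fintype.card W := by
    simpa using Fintype.card_le_of_injective v (Spread.injective hv.1)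
  have h2 := coolTime_le hv
  omega

lemma cool_set_nonempty :
    {T : ℕ | ∃ (k : ℕ) (v : Fin k → W), IsCoolingSeq H v ∧ T = coolTime H v}.Nonempty := by
  obtain ⟨v, hv⟩ := exists_spread_LNum H
  exact ⟨coolTime H v, LNum H, v, isCoolingSeq_max_spread v hv, rfl⟩

lemma coolingNumber_le_LNum_add_one : coolingNumber H ≤ LNum H + 1 := by
  refine csSup_le cool_set_nonempty ?_
  rintro T ⟨k, v, hv, rfl⟩
  have h1 : k ≤ LNum H := le_LNum v hv.1
  have := coolTime_le hv
  omega

lemma LNum_pos (hW : Nonempty W) : 1 ≤ LNum H := by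
  refine le_LNum (fun _ : Fin 1 => hW.some) ?_
  intro i j hij
  have : i = j := Subsingleton.elim i j
  exact absurd (this ▸ hij) (lt_irrefl _)

lemma LNum_le_coolingNumber (hW : Nonempty W) : LNum H ≤ coolingNumber H := by
  obtain ⟨v, hv⟩ := exists_spread_LNum H
  refine le_trans (coolTime_ge hv (LNum_pos hW)) ?_
  exact le_csSup cool_set_bddAbove ⟨LNum H, v, isCoolingSeq_max_spread v hv, rfl⟩

end spread

section lift

variable {W : Type*} [Fintype W] {H : SimpleGraph W}

lemma coolingNumber_le_ILT (hH : H.Connected) :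
    coolingNumber H ≤ coolingNumber (ILT H) := by
  obtain ⟨k, v, hv, hT⟩ := Nat.sSup_mem (cool_set_nonempty (H := H)) cool_set_bddAbove
  set v' : Fin k → W ⊕ W := fun i => inl (v i) with hv'def
  have hspread : Spread (ILT H) v' := by
    intro i j hij
    rw [hv'def]
    simp only
    rw [dist_ll hH]
    exact hv.1 i j hij
  have hcool : IsCoolingSeq (ILT H) v' := by
    refine ⟨hspread, ?_⟩
    intro u
    cases u with
    | inl y =>
      obtain ⟨i, hi⟩ := hv.2 y
      refine ⟨i, ?_⟩
      rw [hv'def]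
      simp only
      rw [dist_ll hH]
      exact hi
    | inr y =>
      obtain ⟨i, hi⟩ := hv.2 y
      refine ⟨i, ?_⟩
      rw [hv'def]
      simp only
      rcases eq_or_ne (v i) y with rfl | hne
      · rw [dist_lr_self]
        have := i.isLt
        omega
      · rw [dist_lr hH hne]
        exact hi
  have hct : coolTime H v ≤ coolTime (ILT H) v' := by
    refine Finset.sup_le fun u _ => ?_
    have hsets : {m : ℕ | ∃ i : Fin k, m = (i : ℕ) + 1 + H.dist (v i) u}
        = {m : ℕ | ∃ i : Fin k, m = (i : ℕ) + 1 + (ILT H).dist (v' i) (inl u)} := by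
      ext m
      constructor
      · rintro ⟨i, rfl⟩
        exact ⟨i, by rw [hv'def]; simp only; rw [dist_ll hH]⟩
      · rintro ⟨i, rfl⟩
        exact ⟨i, by rw [hv'def]; simp only; rw [dist_ll hH]⟩
    rw [hsets]
    exact Finset.le_sup (f := fun u : W ⊕ W =>
      sInf {m : ℕ | ∃ i : Fin k, m = (i : ℕ) + 1 + (ILT H).dist (v' i) u})
      (Finset.mem_univ (inl u))
  calc coolingNumber H = coolTime H v := hT
    _ ≤ coolTime (ILT H) v' := hct
    _ ≤ coolingNumber (ILT H) := le_csSup cool_set_bddAbove ⟨k, v', hcool, rfl⟩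

end lift

section core

variable {B : Type*}

/-- the collapse map from `ILT (ILT Q)`-vertices to `ILT Q`-vertices -/
def delta : (B ⊕ B) ⊕ (B ⊕ B) → B ⊕ B :=
  Sum.elim id (fun α => inr (base α))

@[simp] lemma delta_inl (α : B ⊕ B) : delta (inl α) = α := rfl
@[simp] lemma delta_inr (α : B ⊕ B) : delta (inr α) = inr (base α) := rfl

/-- a cursed pair: top-level clones of an original/clone pair over the same vertex -/
def CursedPair (θ φ : (B ⊕ B) ⊕ (B ⊕ B)) : Prop :=
  ∃ x : B, (θ = inr (inl x) ∧ φ = inr (inr x)) ∨ (θ = inr (inr x) ∧ φ = inr (inl x))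

variable {Q : SimpleGraph B}

lemma dist_rl_eq (hQ : Q.Connected) {x y : B} (h : x ≠ y) :
    (ILT Q).dist (inr x) (inl y) = Q.dist x y := by
  rw [SimpleGraph.dist_comm, dist_lr hQ (Ne.symm h), SimpleGraph.dist_comm]

lemma dist_rl_self (x : B) : (ILT Q).dist (inr x) (inl x) = 1 := by
  rw [SimpleGraph.dist_comm]; exact dist_lr_self x

lemma same_base_dist_one {α β : B ⊕ B} (hne : α ≠ β)
    (hb : base α = base β) : (ILT Q).dist α β = 1 := by
  cases α with
  | inl x =>
    cases β with
    | inl y =>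
      simp only [base_inl] at hb
      exact absurd (congrArg inl hb) hne
    | inr y =>
      simp only [base_inl, base_inr] at hb
      subst hb
      exact dist_lr_self x
  | inr x =>
    cases β with
    | inl y =>
      simp only [base_inl, base_inr] at hb
      subst hb
      exact dist_rl_self x
    | inr y =>
      simp only [base_inr] at hb
      exact absurd (congrArg inr hb) hne

/-- the `σ`-image `inr (base α)` dominates `α` in distances -/
lemma dist_le_sigma (hQ : Q.Connected) {α : B ⊕ B} {z : B ⊕ B} (hz : z ≠ inr (base α)) :
    (ILT Q).dist α z ≤ (ILT Q).dist (inr (base α)) z := by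
  cases α with
  | inl x => exact dist_clone_ge hQ hz
  | inr x => exact le_refl _

/-- main contraction lemma: `delta` does not decrease distances on non-cursed pairs -/
lemma delta_dist (hQ : Q.Connected)
    {θ φ : (B ⊕ B) ⊕ (B ⊕ B)}
    (h2 : 2 ≤ (ILT (ILT Q)).dist θ φ) (hnc : ¬CursedPair θ φ) :
    (ILT (ILT Q)).dist θ φ ≤ (ILT Q).dist (delta θ) (delta φ) := by
  have hQ' : (ILT Q).Connected := ILT_connected hQ
  cases θ with
  | inl α =>
    cases φ with
    | inl β => rw [dist_ll hQ', delta_inl, delta_inl]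
    | inr β =>
      have hne : α ≠ β := by
        rintro rfl
        rw [dist_lr_self] at h2
        omega
      rw [dist_lr hQ' hne, delta_inl, delta_inr]
      have hβz : α ≠ inr (base β) := by
        rintro rfl
        have h1 : (ILT Q).dist (inr (base β)) β = 1 :=
          same_base_dist_one hne rfl
        rw [dist_lr hQ' hne, h1] at h2
        omega
      calc (ILT Q).dist α β = (ILT Q).dist β α := SimpleGraph.dist_comm
        _ ≤ (ILT Q).dist (inr (base β)) α := dist_le_sigma hQ hβz
        _ = _ := SimpleGraph.dist_comm
  | inr α =>
    cases φ with
    | inl β =>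
      have hne : α ≠ β := by
        rintro rfl
        rw [dist_rl_self] at h2
        omega
      rw [dist_rl_eq hQ' hne, delta_inr, delta_inl]
      have hβz : β ≠ inr (base α) := by
        rintro rfl
        have h1 : (ILT Q).dist α (inr (base α)) = 1 := same_base_dist_one hne rfl
        rw [dist_rl_eq hQ' hne, h1] at h2
        omega
      exact dist_le_sigma hQ hβz
    | inr β =>
      rw [delta_inr, delta_inr]
      have hne : α ≠ β := by
        rintro rfl
        rw [SimpleGraph.dist_self] at h2
        omega
      rcases Nat.lt_or_ge ((ILT Q).dist α β) 2 with hD | hD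
      · -- D ≤ 1, and D ≠ 0 since α ≠ β
        have hD1 : (ILT Q).dist α β = 1 := by
          have := hQ'.pos_dist_of_ne hne
          omega
        have hadj : (ILT Q).Adj α β := SimpleGraph.dist_eq_one_iff_adj.mp hD1
        have hTdist : (ILT (ILT Q)).dist (inr α) (inr β) = 2 := dist_rr_adj hQ' hadj
        rw [hTdist]
        rcases adj_base hadj with hbe | hba
        · -- same base: cursed!
          exfalso
          apply hnc
          cases α with
          | inl x =>
            cases β with
            | inl y =>
              simp only [base_inl] at hbe
              exact absurd (congrArg inl hbe) hne
            | inr y =>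
              simp only [base_inl, base_inr] at hbe
              subst hbe
              exact ⟨x, Or.inl ⟨rfl, rfl⟩⟩
          | inr x =>
            cases β with
            | inl y =>
              simp only [base_inl, base_inr] at hbe
              subst hbe
              exact ⟨x, Or.inr ⟨rfl, rfl⟩⟩
            | inr y =>
              simp only [base_inr] at hbe
              exact absurd (congrArg inr hbe) hne
        · rw [dist_rr_adj hQ hba]
      · -- D ≥ 2
        have hTdist : (ILT (ILT Q)).dist (inr α) (inr β) = (ILT Q).dist α β :=
          dist_rr hQ' hD
        rw [hTdist]
        have hbne : base α ≠ base β := by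
          intro hbe
          have := same_base_dist_one (Q := Q) hne hbe
          omega
        have hs1 : β ≠ inr (base α) := by
          rintro rfl
          have := same_base_dist_one (Q := Q) hne (by simp)
          omega
        have hs2 : (inr (base α) : B ⊕ B) ≠ inr (base β) := by
          simpa using hbne
        calc (ILT Q).dist α β ≤ (ILT Q).dist (inr (base α)) β := dist_le_sigma hQ hs1
          _ = (ILT Q).dist β (inr (base α)) := SimpleGraph.dist_comm
          _ ≤ (ILT Q).dist (inr (base β)) (inr (base α)) := dist_le_sigma hQ hs2
          _ = _ := SimpleGraph.dist_comm

end core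

section swap

variable {U : Type*} {M : SimpleGraph U}

lemma adj_swap (x : U ⊕ U) : (ILT M).Adj x (Sum.swap x) := by
  cases x with
  | inl m => exact adj_lr.mpr (Or.inl rfl)
  | inr m => exact adj_rl.mpr (Or.inl rfl)

lemma dist_swap (x : U ⊕ U) : (ILT M).dist x (Sum.swap x) = 1 :=
  SimpleGraph.dist_eq_one_iff_adj.mpr (adj_swap x)

lemma swap_far (hM : M.Connected) {x q : U ⊕ U} (h3 : 3 ≤ (ILT M).dist x q) :
    (ILT M).dist (Sum.swap x) q = (ILT M).dist x q := by
  cases x with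
  | inl m =>
    cases q with
    | inl s =>
      have hms : m ≠ s := by
        rintro rfl
        rw [SimpleGraph.dist_self] at h3
        omega
      rw [Sum.swap_inl, dist_rl_eq hM hms, dist_ll hM]
    | inr s =>
      have hms : m ≠ s := by
        rintro rfl
        rw [dist_lr_self] at h3
        omega
      rw [dist_lr hM hms] at h3 ⊢
      rw [Sum.swap_inl, dist_rr hM (by omega)]
  | inr m =>
    cases q with
    | inl s =>
      have hms : m ≠ s := by
        rintro rfl
        rw [dist_rl_self] at h3
        omega
      rw [dist_rl_eq hM hms] at h3 ⊢
      rw [Sum.swap_inr, dist_ll hM]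
    | inr s =>
      have hms : m ≠ s := by
        rintro rfl
        rw [SimpleGraph.dist_self] at h3
        omega
      have hnadj : ¬ M.Adj m s := by
        intro hadj
        rw [dist_rr_adj hM hadj] at h3
        omega
      have hd2 : 2 ≤ M.dist m s := by
        have h0 := hM.pos_dist_of_ne hms
        have h1 : M.dist m s ≠ 1 := fun hc =>
          hnadj (SimpleGraph.dist_eq_one_iff_adj.mp hc)
        omega
      rw [dist_rr hM hd2] at h3 ⊢
      rw [Sum.swap_inr, dist_lr hM hms]

lemma clone_swap_far (hM : M.Connected) {x : U ⊕ U} {z : (U ⊕ U) ⊕ (U ⊕ U)}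
    (h3 : 3 ≤ (ILT (ILT M)).dist (inr x) z) :
    (ILT (ILT M)).dist (inr (Sum.swap x)) z = (ILT (ILT M)).dist (inr x) z := by
  have hK : (ILT M).Connected := ILT_connected hM
  cases z with
  | inl q =>
    have hqx : x ≠ q := by
      rintro rfl
      rw [dist_rl_self] at h3
      omega
    rw [dist_rl_eq hK hqx] at h3 ⊢
    have hqs : Sum.swap x ≠ q := by
      rintro rfl
      have := dist_swap (M := M) x
      omega
    rw [dist_rl_eq hK hqs]
    exact swap_far hM h3
  | inr q =>
    have hqx : x ≠ q := by
      rintro rfl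
      rw [SimpleGraph.dist_self] at h3
      omega
    have hnadj : ¬ (ILT M).Adj x q := by
      intro hadj
      rw [dist_rr_adj hK hadj] at h3
      omega
    have hd2 : 2 ≤ (ILT M).dist x q := by
      have h0 := hK.pos_dist_of_ne hqx
      have h1 : (ILT M).dist x q ≠ 1 := fun hc =>
        hnadj (SimpleGraph.dist_eq_one_iff_adj.mp hc)
      omega
    rw [dist_rr hK hd2] at h3 ⊢
    have hsf := swap_far hM h3
    rw [dist_rr hK (by rw [hsf]; omega), hsf]

lemma dist_swap_pair (hM : M.Connected) (x : U ⊕ U) :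
    (ILT (ILT M)).dist (inr (Sum.swap x)) (inr x) = 2 :=
  dist_rr_adj (ILT_connected hM) (adj_swap x).symm

end swap

section flagdef

variable {U : Type*}

/-- flagged positions: the `inl`-role element of a cursed consecutive pair -/
def IsFlag {k : ℕ} (a : Fin k → ((U ⊕ U) ⊕ (U ⊕ U)) ⊕ ((U ⊕ U) ⊕ (U ⊕ U)))
    (i : Fin k) : Prop :=
  ∃ x : U ⊕ U, a i = inr (inl x) ∧
    ∃ j : Fin k, ((j : ℕ) = (i : ℕ) + 1 ∨ (i : ℕ) = (j : ℕ) + 1) ∧ a j = inr (inr x)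

open scoped Classical in
/-- the repaired sequence in `ILT (ILT M)` -/
noncomputable def bmap {k : ℕ} (a : Fin k → ((U ⊕ U) ⊕ (U ⊕ U)) ⊕ ((U ⊕ U) ⊕ (U ⊕ U)))
    (i : Fin k) : (U ⊕ U) ⊕ (U ⊕ U) :=
  if h : IsFlag a i then inr (Sum.swap h.choose) else delta (a i)

end flagdef

section corelemma

variable {U : Type*} [Fintype U] {M : SimpleGraph U}

lemma LNum_ILT3_le (hM : M.Connected) :
    LNum (ILT (ILT (ILT M))) ≤ LNum (ILT (ILT M)) := by
  classical
  have hK : (ILT M).Connected := ILT_connected hM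
  have hH : (ILT (ILT M)).Connected := ILT_connected hK
  refine csSup_le lnum_set_nonempty ?_
  rintro k ⟨a, ha⟩
  have hgap : ∀ i j : Fin k, i ≠ j →
      ((i : ℕ) - (j : ℕ)) + ((j : ℕ) - (i : ℕ)) < (ILT (ILT (ILT M))).dist (a i) (a j) :=
    fun i j hij => ha.gap_lt hij
  have hane : ∀ i j : Fin k, i ≠ j → a i ≠ a j := by
    intro i j hij he
    have h1 := hgap i j hij
    rw [he, SimpleGraph.dist_self] at h1
    omega
  have hcursed : ∀ i j : Fin k, i ≠ j → CursedPair (a i) (a j) →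
      IsFlag a i ∨ IsFlag a j := by
    intro i j hij hc
    have hvne : (i : ℕ) ≠ (j : ℕ) := fun h => hij (Fin.ext h)
    obtain ⟨x, hx | hx⟩ := hc
    · have hd : (ILT (ILT (ILT M))).dist (a i) (a j) = 2 := by
        rw [hx.1, hx.2]
        exact dist_rr_adj hH (adj_lr.mpr (Or.inl rfl))
      have h1 := hgap i j hij
      rw [hd] at h1
      exact Or.inl ⟨x, hx.1, j, by omega, hx.2⟩
    · have hd : (ILT (ILT (ILT M))).dist (a i) (a j) = 2 := by
        rw [hx.1, hx.2]
        exact dist_rr_adj hH (adj_rl.mpr (Or.inl rfl))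
      have h1 := hgap i j hij
      rw [hd] at h1
      exact Or.inr ⟨x, hx.2, i, by omega, hx.1⟩
  have hdel : ∀ i j : Fin k, i ≠ j → ¬CursedPair (a i) (a j) →
      ((i : ℕ) - (j : ℕ)) + ((j : ℕ) - (i : ℕ))
        < (ILT (ILT M)).dist (delta (a i)) (delta (a j)) := by
    intro i j hij hc
    have h1 := hgap i j hij
    have hvne : (i : ℕ) ≠ (j : ℕ) := fun h => hij (Fin.ext h)
    have h2 : 2 ≤ (ILT (ILT (ILT M))).dist (a i) (a j) := by omega
    have h3 := delta_dist hK h2 hc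
    omega
  have hmix : ∀ i j : Fin k, i ≠ j → (hi : IsFlag a i) → ¬IsFlag a j →
      ((i : ℕ) - (j : ℕ)) + ((j : ℕ) - (i : ℕ))
        < (ILT (ILT M)).dist (inr (Sum.swap hi.choose)) (delta (a j)) := by
    intro i j hij hi hj
    obtain ⟨hax, p, hp1, hap⟩ := hi.choose_spec
    set x := hi.choose with hxdef
    have hvne : (i : ℕ) ≠ (j : ℕ) := fun h => hij (Fin.ext h)
    by_cases haj : a j = inr (inr x)
    · have hd : (ILT (ILT (ILT M))).dist (a i) (a j) = 2 := by
        rw [hax, haj]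
        exact dist_rr_adj hH (adj_lr.mpr (Or.inl rfl))
      have h1 := hgap i j hij
      rw [hd] at h1
      rw [haj, delta_inr, base_inr, dist_swap_pair hM]
      omega
    · have hpj : p ≠ j := by
        rintro rfl
        exact haj hap
      have hpi : p ≠ i := by
        rintro rfl
        rw [hax] at hap
        simp at hap
      have hnc1 : ¬CursedPair (a i) (a j) := by
        rintro ⟨z, ⟨h1, h2⟩ | ⟨h1, h2⟩⟩
        · rw [hax] at h1
          simp only [inr.injEq, inl.injEq] at h1
          exact haj (h1 ▸ h2)
        · rw [hax] at h1
          simp at h1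
      have hnc2 : ¬CursedPair (a p) (a j) := by
        rintro ⟨z, ⟨h1, h2⟩ | ⟨h1, h2⟩⟩
        · rw [hap] at h1
          simp at h1
        · rw [hap] at h1
          simp only [inr.injEq] at h1
          apply hane i j hij
          rw [hax, h2, h1]
      have hb1 := hdel i j hij hnc1
      have hb2 := hdel p j hpj hnc2
      rw [hax] at hb1
      simp only [delta_inr, base_inl] at hb1
      rw [hap] at hb2
      simp only [delta_inr, base_inr] at hb2
      have c1 : (p : ℕ) ≠ (j : ℕ) := fun h => hpj (Fin.ext h)
      have h3 : 3 ≤ (ILT (ILT M)).dist (inr x) (delta (a j)) := by omega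
      rw [clone_swap_far hM h3]
      omega
  have main : ∀ i j : Fin k, i ≠ j →
      ((i : ℕ) - (j : ℕ)) + ((j : ℕ) - (i : ℕ))
        < (ILT (ILT M)).dist (bmap a i) (bmap a j) := by
    intro i j hij
    by_cases hi : IsFlag a i <;> by_cases hj : IsFlag a j
    · -- both flagged
      simp only [bmap]
      rw [dif_pos hi, dif_pos hj]
      obtain ⟨hax, p, hp1, hap⟩ := hi.choose_spec
      obtain ⟨hay, q, hq1, haq⟩ := hj.choose_spec
      set x := hi.choose with hxdef
      set y := hj.choose with hydef
      have hxy : x ≠ y := by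
        intro hxyeq
        exact hane i j hij (by rw [hax, hay, hxyeq])
      have hnc1 : ¬CursedPair (a i) (a j) := by
        rintro ⟨z, ⟨h1, h2⟩ | ⟨h1, h2⟩⟩
        · rw [hay] at h2
          simp at h2
        · rw [hax] at h1
          simp at h1
      have hb1 := hdel i j hij hnc1
      rw [hax, hay] at hb1
      simp only [delta_inr, base_inl] at hb1
      have h3 : 3 ≤ (ILT (ILT M)).dist (inr x) (inr y) := by
        rcases Nat.lt_or_ge (((i : ℕ) - (j : ℕ)) + ((j : ℕ) - (i : ℕ))) 2 with hg | hg
        · have hpq : p ≠ q := by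
            rintro rfl
            rw [hap] at haq
            simp only [inr.injEq] at haq
            exact hxy haq
          have hnc2 : ¬CursedPair (a p) (a q) := by
            rintro ⟨z, ⟨h1, h2⟩ | ⟨h1, h2⟩⟩
            · rw [hap] at h1
              simp at h1
            · rw [haq] at h2
              simp at h2
          have hb2 := hdel p q hpq hnc2
          rw [hap, haq] at hb2
          simp only [delta_inr, base_inr] at hb2
          have hpj : p ≠ j := by
            rintro rfl
            rw [hap] at hay
            simp at hay
          have hqi : q ≠ i := by
            rintro rfl
            rw [haq] at hax
            simp at hax
          have c1 : (p : ℕ) ≠ (j : ℕ) := fun h => hpj (Fin.ext h)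
          have c2 : (q : ℕ) ≠ (i : ℕ) := fun h => hqi (Fin.ext h)
          have c3 : (i : ℕ) ≠ (j : ℕ) := fun h => hij (Fin.ext h)
          omega
        · omega
      have e1 := clone_swap_far hM (z := inr y) h3
      have e2 : 3 ≤ (ILT (ILT M)).dist (inr y) (inr (Sum.swap x)) := by
        rw [SimpleGraph.dist_comm, e1]
        exact h3
      have e3 := clone_swap_far hM (z := inr (Sum.swap x)) e2
      have efin : (ILT (ILT M)).dist (inr (Sum.swap x)) (inr (Sum.swap y))
          = (ILT (ILT M)).dist (inr x) (inr y) := by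
        rw [SimpleGraph.dist_comm, e3, SimpleGraph.dist_comm, e1]
      rw [efin]
      exact hb1
    · simp only [bmap]
      rw [dif_pos hi, dif_neg hj]
      exact hmix i j hij hi hj
    · simp only [bmap]
      rw [dif_neg hi, dif_pos hj]
      have h := hmix j i (Ne.symm hij) hj hi
      rw [SimpleGraph.dist_comm]
      omega
    · simp only [bmap]
      rw [dif_neg hi, dif_neg hj]
      refine hdel i j hij ?_
      intro hc
      rcases hcursed i j hij hc with h | h
      exacts [hi h, hj h]
  refine le_LNum (bmap a) ?_
  intro i j hij
  have h := main i j (ne_of_lt hij)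
  have hle : (i : ℕ) < (j : ℕ) := hij
  omega

end corelemma

end ILTproof

namespace ILTproof

variable {V : Type*} {G : SimpleGraph V}

lemma ILTiter_connected (hG : G.Connected) : ∀ t, (ILTiter G t).Connected
  | 0 => hG
  | t + 1 => ILT_connected (ILTiter_connected hG t)

variable [Fintype V]

lemma LNum_chain (hG : G.Connected) : ∀ u, LNum (ILTiter G (u + 2)) ≤ LNum (ILTiter G 2)
  | 0 => le_refl _
  | u + 1 => by
    have h1 : LNum (ILTiter G (u + 1 + 2)) ≤ LNum (ILTiter G (u + 2)) := by
      letI : Fintype (ILTVert V u) := ILTVert.fintype V u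
      exact LNum_ILT3_le (M := ILTiter G u) (ILTiter_connected hG u)
    exact le_trans h1 (LNum_chain hG u)

lemma CL_chain (hG : G.Connected) :
    ∀ u, coolingNumber (ILTiter G 2) ≤ coolingNumber (ILTiter G (u + 2))
  | 0 => le_refl _
  | u + 1 => by
    have h1 : coolingNumber (ILTiter G (u + 2)) ≤ coolingNumber (ILTiter G (u + 1 + 2)) := by
      letI : Fintype (ILTVert V (u + 2)) := ILTVert.fintype V (u + 2)
      exact coolingNumber_le_ILT (H := ILTiter G (u + 2)) (ILTiter_connected hG (u + 2))
    exact le_trans (CL_chain hG u) h1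

end ILTproof

/-- For every finite connected simple graph `G` and `t ≥ 2`,
`CL(ILT_2(G)) ≤ CL(ILT_t(G)) ≤ CL(ILT_2(G)) + 1`. -/
theorem coolingNumber_ILTiter_bounds {V : Type*} [Fintype V] (G : SimpleGraph V)
    (hG : G.Connected) (t : ℕ) (ht : 2 ≤ t) :
    coolingNumber (ILTiter G 2) ≤ coolingNumber (ILTiter G t) ∧
    coolingNumber (ILTiter G t) ≤ coolingNumber (ILTiter G 2) + 1 := by
  obtain ⟨u, rfl⟩ : ∃ u, t = u + 2 := ⟨t - 2, by omega⟩
  have hn2 : Nonempty (ILTVert V 2) := by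
    obtain ⟨x⟩ := hG.nonempty
    exact ⟨Sum.inl (Sum.inl x)⟩
  constructor
  · exact ILTproof.CL_chain hG u
  · calc coolingNumber (ILTiter G (u + 2))
        ≤ ILTproof.LNum (ILTiter G (u + 2)) + 1 := ILTproof.coolingNumber_le_LNum_add_one
      _ ≤ ILTproof.LNum (ILTiter G 2) + 1 := by
          have := ILTproof.LNum_chain hG u
          omega
      _ ≤ coolingNumber (ILTiter G 2) + 1 := by
          have := ILTproof.LNum_le_coolingNumber (H := ILTiter G 2) hn2
          omega
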